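/- Let V be a finite-dimensional real vector space with positive semidefinite symmetric bilinear form and R ⊆ V an irreducible extended affine root system. Let V⁰ be the radical of the form, R⁰ = {α ∈ R : (α,α) = 0}, R× = R \ R⁰. Then the image R̄ of R under the canonical projection V → V/V⁰ is a finite root system in V/V⁰ (where the induced form on V/V⁰ is positive definite). -/

import Mathlib

/-- The canonical image of an irreducible extended affine root system `R` in
`V/V⁰` (quotient by the radical of the positive semidefinite form) is a finite
root system: the induced form is positive definite, the image of `R` is finite,
spans the quotient, and is closed under reflections with integral Cartan numbers. -/
theorem stmt10 {V : Type*} [AddCommGroup V] [Module ℝ V] [FiniteDimensional ℝ V]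
    (B : V →ₗ[ℝ] V →ₗ[ℝ] ℝ)
    (hsym : ∀ x y : V, B x y = B y x)
    (hpsd : ∀ x : V, 0 ≤ B x x)
    (hnontriv : ∃ x : V, B x x ≠ 0)
    (R : Set V)
    -- (R1) `⟨R⟩` is a full lattice in `V`
    (hR1a : Submodule.span ℝ R = ⊤)
    (hR1b : Nonempty ((Fin (Module.finrank ℝ V) → ℤ) ≃+ AddSubgroup.closure R))
    -- (R2) integrality of Cartan numbers for non-isotropic roots
    (hR2 : ∀ a ∈ R, B a a ≠ 0 → ∀ b ∈ R, B b b ≠ 0 →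
      ∃ z : ℤ, 2 * B b a / B a a = (z : ℝ))
    -- (R3) closure under reflections in non-isotropic roots
    (hR3 : ∀ a ∈ R, B a a ≠ 0 → ∀ b ∈ R, b - (2 * B b a / B a a) • a ∈ R)
    -- (R4) `R⁰ = V⁰ ∩ (R× - R×)`
    (hR4 : {a ∈ R | B a a = 0} =
      {v : V | (∀ w : V, B v w = 0) ∧
        ∃ a ∈ R, ∃ b ∈ R, B a a ≠ 0 ∧ B b b ≠ 0 ∧ v = a - b})
    -- (R5) reduced-ness: `2α ∉ R` for non-isotropic `α ∈ R`
    (hR5 : ∀ a ∈ R, B a a ≠ 0 → (2 : ℝ) • a ∉ R)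
    -- irreducibility of `R×`
    (hirr : ∀ S T : Set V, {a ∈ R | B a a ≠ 0} = S ∪ T →
      (∀ s ∈ S, ∀ t ∈ T, B s t = 0) → S = ∅ ∨ T = ∅)
    -- the induced form on the quotient by the radical
    (B' : (V ⧸ LinearMap.ker B) →ₗ[ℝ] (V ⧸ LinearMap.ker B) →ₗ[ℝ] ℝ)
    (hB' : ∀ x y : V,
      B' ((LinearMap.ker B).mkQ x) ((LinearMap.ker B).mkQ y) = B x y) :
    (Set.Finite ((LinearMap.ker B).mkQ '' R)) ∧
    (Submodule.span ℝ ((LinearMap.ker B).mkQ '' R) = ⊤) ∧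
    (∀ q : V ⧸ LinearMap.ker B, q ≠ 0 → 0 < B' q q) ∧
    (∀ a ∈ (LinearMap.ker B).mkQ '' R, a ≠ 0 →
      ∀ b ∈ (LinearMap.ker B).mkQ '' R,
        b - (2 * B' b a / B' a a) • a ∈ (LinearMap.ker B).mkQ '' R) ∧
    (∀ a ∈ (LinearMap.ker B).mkQ '' R, a ≠ 0 →
      ∀ b ∈ (LinearMap.ker B).mkQ '' R,
        ∃ z : ℤ, 2 * B' b a / B' a a = (z : ℝ)) := by
  classical
  -- Cauchy–Schwarz for the positive semidefinite form
  have hcs : ∀ x y : V, (B x y) ^ 2 ≤ B x x * B y y := by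
    intro x y
    have h : ∀ t : ℝ, 0 ≤ B y y * (t * t) + (2 * B x y) * t + B x x := by
      intro t
      have h0 := hpsd (x + t • y)
      have e : B (x + t • y) (x + t • y)
          = B y y * (t * t) + (2 * B x y) * t + B x x := by
        simp only [map_add, map_smul, LinearMap.add_apply, LinearMap.smul_apply,
          smul_eq_mul]
        rw [hsym y x]; ring
      rw [e] at h0; exact h0
    have hd := discrim_le_zero h
    rw [discrim] at hd
    nlinarith [hd]
  have hker : ∀ x : V, B x x = 0 ↔ x ∈ LinearMap.ker B := by
    intro x
    constructor
    · intro hx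
      rw [LinearMap.mem_ker]
      ext y
      have h1 := hcs x y
      rw [hx] at h1
      have h2 : B x y = 0 := by nlinarith [sq_nonneg (B x y)]
      simpa using h2
    · intro hx
      rw [LinearMap.mem_ker] at hx
      simp [hx]
  have hQ0 : ∀ x : V, (LinearMap.ker B).mkQ x = 0 ↔ B x x = 0 := by
    intro x
    rw [Submodule.mkQ_apply, Submodule.Quotient.mk_eq_zero, ← hker x]
  -- positive definiteness on quotient
  have hpos : ∀ q : V ⧸ LinearMap.ker B, q ≠ 0 → 0 < B' q q := by
    intro q hq
    obtain ⟨x, rfl⟩ := Submodule.mkQ_surjective _ q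
    rw [hB']
    have hne : B x x ≠ 0 := fun h => hq ((hQ0 x).mpr h)
    exact lt_of_le_of_ne (hpsd x) (Ne.symm hne)
  -- span
  have hspan : Submodule.span ℝ ((LinearMap.ker B).mkQ '' R) = ⊤ := by
    rw [Submodule.span_image, hR1a, Submodule.map_top, Submodule.range_mkQ]
  -- finiteness
  have hfin : Set.Finite ((LinearMap.ker B).mkQ '' R) := by
    obtain ⟨b, hbsub, hbspan, hbli⟩ :=
      exists_linearIndependent ℝ ((LinearMap.ker B).mkQ '' R)
    rw [hspan] at hbspan
    have hbfin : b.Finite := hbli.setFinite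
    haveI := hbfin.to_subtype
    set F : (V ⧸ LinearMap.ker B) → (b → ℝ) := fun q t => B' q t with hF
    have hFinj : ∀ q q' : V ⧸ LinearMap.ker B, F q = F q' → q = q' := by
      intro q q' h
      have heq : B' q = B' q' := by
        apply LinearMap.ext_on hbspan
        intro x hx
        exact congrFun h ⟨x, hx⟩
      have h0 : B' (q - q') (q - q') = 0 := by
        simp only [map_sub, LinearMap.sub_apply, heq]
        ring
      by_contra hne
      have : q - q' ≠ 0 := sub_ne_zero.mpr hne
      exact absurd h0 (ne_of_gt (hpos _ this))
    set E : b → Set ℝ := fun t => (fun z : ℤ => B' ↑t ↑t / 2 * z) '' (Set.Icc (-4) 4) with hE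
    have hEfin : ∀ t : b, (E t).Finite := fun t => (Set.finite_Icc _ _).image _
    have hpifin : (Set.pi Set.univ E).Finite := Set.Finite.pi hEfin
    have hsub : {q ∈ (LinearMap.ker B).mkQ '' R | q ≠ 0} ⊆ F ⁻¹' (Set.pi Set.univ E) := by
      rintro q ⟨⟨b₀, hb₀, rfl⟩, hq0⟩
      intro t _
      obtain ⟨a₀, ha₀, hta⟩ := hbsub t.2
      have htne : (t : V ⧸ LinearMap.ker B) ≠ 0 := hbli.ne_zero t
      have haa : B a₀ a₀ ≠ 0 := fun h => htne (by rw [← hta]; exact (hQ0 a₀).mpr h)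
      have hbb : B b₀ b₀ ≠ 0 := fun h => hq0 ((hQ0 b₀).mpr h)
      have hApos : 0 < B a₀ a₀ := lt_of_le_of_ne (hpsd a₀) (Ne.symm haa)
      have hBpos : 0 < B b₀ b₀ := lt_of_le_of_ne (hpsd b₀) (Ne.symm hbb)
      obtain ⟨z, hz⟩ := hR2 a₀ ha₀ haa b₀ hb₀ hbb
      obtain ⟨w, hw⟩ := hR2 b₀ hb₀ hbb a₀ ha₀ haa
      have hFt : F ((LinearMap.ker B).mkQ b₀) t = B b₀ a₀ := by
        rw [hF]; simp only; rw [← hta, hB']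
      have hBtt : B' ↑t ↑t = B a₀ a₀ := by rw [← hta, hB']
      -- bound on z
      have hzreal : (z : ℝ) = 2 * B b₀ a₀ / B a₀ a₀ := hz.symm
      have hwreal : (w : ℝ) = 2 * B a₀ b₀ / B b₀ b₀ := hw.symm
      have hcs' := hcs b₀ a₀
      have hzw : (z : ℝ) * w = 4 * (B b₀ a₀) ^ 2 / (B a₀ a₀ * B b₀ b₀) := by
        rw [hzreal, hwreal, hsym a₀ b₀]
        field_simp
        ring
      have h1 : (z : ℝ) * w ≤ 4 := by
        rw [hzw, div_le_iff₀ (by positivity)]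
        nlinarith [hcs']
      have h0 : 0 ≤ (z : ℝ) * w := by rw [hzw]; positivity
      have hzbound : |(z : ℝ)| ≤ 4 := by
        by_cases hp : B b₀ a₀ = 0
        · rw [hzreal, hp]; simp
        · have hwne : (w : ℝ) ≠ 0 := by
            rw [hwreal, hsym a₀ b₀]
            exact div_ne_zero (by simpa using hp) hbb
          have hwint : w ≠ 0 := fun h => hwne (by rw [h]; simp)
          have hw1 : (1 : ℝ) ≤ |(w : ℝ)| := by
            have := Int.one_le_abs hwint
            calc (1 : ℝ) = ((1 : ℤ) : ℝ) := by norm_num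
            _ ≤ ((|w| : ℤ) : ℝ) := by exact_mod_cast this
            _ = |(w : ℝ)| := by push_cast; ring
          calc |(z : ℝ)| = |(z : ℝ)| * 1 := by ring
          _ ≤ |(z : ℝ)| * |(w : ℝ)| := by
              apply mul_le_mul_of_nonneg_left hw1 (abs_nonneg _)
          _ = |(z : ℝ) * w| := (abs_mul _ _).symm
          _ = (z : ℝ) * w := abs_of_nonneg h0
          _ ≤ 4 := h1
      have hzIcc : z ∈ Set.Icc (-4 : ℤ) 4 := by
        rw [Set.mem_Icc, ← abs_le]
        have : |z| ≤ (4 : ℤ) := by exact_mod_cast (by rwa [← Int.cast_abs] at hzbound :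
          ((|z| : ℤ) : ℝ) ≤ 4)
        exact this
      refine ⟨z, hzIcc, ?_⟩
      rw [hBtt, hFt]
      show B a₀ a₀ / 2 * (z : ℝ) = B b₀ a₀
      rw [hzreal]
      field_simp
    have hSfin : Set.Finite {q ∈ (LinearMap.ker B).mkQ '' R | q ≠ 0} :=
      Set.Finite.subset (Set.Finite.preimage (fun a _ c _ h => hFinj a c h) hpifin) hsub
    have : (LinearMap.ker B).mkQ '' R ⊆
        insert 0 {q ∈ (LinearMap.ker B).mkQ '' R | q ≠ 0} := by
      intro q hq
      by_cases h : q = 0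
      · exact Or.inl h
      · exact Or.inr ⟨hq, h⟩
    exact Set.Finite.subset (hSfin.insert 0) this
  refine ⟨hfin, hspan, hpos, ?_, ?_⟩
  · -- reflections
    rintro a ⟨a₀, ha₀, rfl⟩ hane b ⟨b₀, hb₀, rfl⟩
    have haa : B a₀ a₀ ≠ 0 := fun h => hane ((hQ0 a₀).mpr h)
    refine ⟨b₀ - (2 * B b₀ a₀ / B a₀ a₀) • a₀, hR3 a₀ ha₀ haa b₀ hb₀, ?_⟩
    rw [map_sub, map_smul, hB', hB']
  · -- integrality
    rintro a ⟨a₀, ha₀, rfl⟩ hane b ⟨b₀, hb₀, rfl⟩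
    have haa : B a₀ a₀ ≠ 0 := fun h => hane ((hQ0 a₀).mpr h)
    rw [hB', hB']
    by_cases hbb : B b₀ b₀ = 0
    · refine ⟨0, ?_⟩
      have h1 := hcs b₀ a₀
      rw [hbb] at h1
      have : B b₀ a₀ = 0 := by nlinarith [sq_nonneg (B b₀ a₀)]
      rw [this]
      simp
    · exact hR2 a₀ ha₀ haa b₀ hb₀ hbb
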